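/- There exists a unique pair (x*, y*) with x* > 0 and y* > 0 such that F(x*, y*) = (0, 0). Moreover, y* is the unique positive solution of (2a(y)−1)p = μ, and x* = ν·y* / (2(1−a(y*))·p). -/

import Mathlib

/-- Model 2 (regulated self-renewal): the FLLN vector field
`F(x, y) = ((2a(y)−1)px − μx, 2(1−a(y))px − νy)` has a unique zero `(x*, y*)` with
`x* > 0`, `y* > 0`; moreover `y*` is the unique positive solution of `(2a(y)−1)p = μ`
and `x* = ν y* / (2(1−a(y*)) p)`. -/
theorem model2_unique_positive_steady_state
    (p μ ν : ℝ) (a : ℝ → ℝ)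
    (hp : 0 < p) (hμ : 0 < μ) (hν : 0 < ν)
    (ha : ContDiff ℝ 2 a)
    (ha01 : ∀ y : ℝ, 0 ≤ y → 0 < a y ∧ a y < 1)
    (hadec : ∀ y : ℝ, 0 ≤ y → deriv a y < 0)
    (ha0p : μ < (2 * a 0 - 1) * p)
    (halim : Filter.Tendsto a Filter.atTop (nhds 0))
    (hstab : ∀ y : ℝ, 0 < y → -(deriv a y) * y < 1 - a y)
    (F : ℝ × ℝ → ℝ × ℝ)
    (hF : ∀ x y : ℝ, F (x, y) = ((2 * a y - 1) * p * x - μ * x,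
      2 * (1 - a y) * p * x - ν * y)) :
    (∃! z : ℝ × ℝ, 0 < z.1 ∧ 0 < z.2 ∧ F z = (0, 0)) ∧
    ∀ z : ℝ × ℝ, 0 < z.1 → 0 < z.2 → F z = (0, 0) →
      (∀ y : ℝ, 0 < y → ((2 * a y - 1) * p = μ ↔ y = z.2)) ∧
      z.1 = ν * z.2 / (2 * (1 - a z.2) * p) := by
  have hcont : Continuous a := ha.continuous
  -- a is strictly antitone on [0,∞)
  have hanti : StrictAntiOn a (Set.Ici 0) := by
    apply strictAntiOn_of_deriv_neg (convex_Ici 0) hcont.continuousOn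
    intro x hx
    rw [interior_Ici] at hx
    exact hadec x (le_of_lt hx)
  set c : ℝ := (μ + p) / (2 * p) with hc
  have hca0 : c < a 0 := by
    rw [hc, div_lt_iff₀ (by positivity)]
    nlinarith
  -- find Y with a Y < c
  have hcpos : 0 < c := by positivity
  have hev : ∀ᶠ y in Filter.atTop, a y < c := halim.eventually_lt_const hcpos
  obtain ⟨Y, hYc, hY0⟩ := (hev.and (Filter.eventually_ge_atTop (0:ℝ))).exists
  -- IVT gives y* ∈ [0, Y] with a y* = c
  have hmem : c ∈ Set.Icc (a Y) (a 0) := ⟨le_of_lt hYc, le_of_lt hca0⟩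
  obtain ⟨ys, hysI, hysc⟩ := intermediate_value_Icc' hY0 hcont.continuousOn hmem
  have hys0 : 0 ≤ ys := hysI.1
  have hyspos : 0 < ys := by
    rcases lt_or_eq_of_le hys0 with h | h
    · exact h
    · exact absurd (h ▸ hysc) (ne_of_gt hca0)
  have hays1 : a ys < 1 := (ha01 ys hys0).2
  have hdenpos : 0 < 2 * (1 - a ys) * p := by nlinarith
  set xs : ℝ := ν * ys / (2 * (1 - a ys) * p) with hxs
  have hxspos : 0 < xs := by positivity
  -- key equivalences
  have hkey : ∀ y : ℝ, 0 ≤ y → ((2 * a y - 1) * p = μ ↔ y = ys) := by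
    intro y hy
    constructor
    · intro h
      have hac : a y = c := by
        rw [hc, eq_div_iff (by positivity)]; nlinarith
      exact hanti.injOn hy hys0 (hac.trans hysc.symm)
    · intro h
      subst h
      rw [hysc, hc]
      field_simp
      ring
  have hmu : (2 * a ys - 1) * p = μ := (hkey ys hys0).2 rfl
  have hFzs : F (xs, ys) = (0, 0) := by
    rw [hF]
    refine Prod.ext ?_ ?_
    · show (2 * a ys - 1) * p * xs - μ * xs = 0
      rw [hmu]; ring
    · show 2 * (1 - a ys) * p * xs - ν * ys = 0
      rw [hxs]
      field_simp
      rw [div_self (sub_pos.mpr hays1).ne', sub_self, mul_zero]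
  -- uniqueness: any positive zero equals (xs, ys)
  have huniq : ∀ z : ℝ × ℝ, 0 < z.1 → 0 < z.2 → F z = (0, 0) → z = (xs, ys) := by
    rintro ⟨x, y⟩ hx hy hz
    rw [hF] at hz
    have h1 : (2 * a y - 1) * p * x - μ * x = 0 := congrArg Prod.fst hz
    have h2 : 2 * (1 - a y) * p * x - ν * y = 0 := congrArg Prod.snd hz
    have hmu' : (2 * a y - 1) * p = μ := by
      have : ((2 * a y - 1) * p - μ) * x = 0 := by linarith [h1]
      rcases mul_eq_zero.mp this with h | h
      · linarith
      · exact absurd h (ne_of_gt hx)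
    have hyy : y = ys := (hkey y (le_of_lt hy)).1 hmu'
    subst hyy
    have hxx : x = xs := by
      rw [hxs, eq_div_iff (ne_of_gt hdenpos)]
      linarith [h2]
    simp [hxx]
  refine ⟨⟨(xs, ys), ⟨hxspos, hyspos, hFzs⟩, fun z hz => huniq z hz.1 hz.2.1 hz.2.2⟩, ?_⟩
  intro z hz1 hz2 hzF
  have hz := huniq z hz1 hz2 hzF
  subst hz
  exact ⟨fun y hy => hkey y (le_of_lt hy), rfl⟩
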